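/- If (G, τ) is a Hausdorff Abelian paratopological group which has countable π-character at the identity, then G is submetrizable. -/

import Mathlib

open Topology Set Filter Pointwise

section Aux
variable {G : Type*} [CommGroup G]

lemma dd_smul_eq (c : G) (A : Set G) : (c • A) * (c • A)⁻¹ = A * A⁻¹ := by
  ext z
  constructor
  · rintro ⟨a, ha, b, hb, rfl⟩
    obtain ⟨u, hu, rfl⟩ := ha
    rw [Set.mem_inv] at hb
    obtain ⟨w, hw, hcw⟩ := hb
    have hb' : b = (c * w)⁻¹ := by
      simp only [smul_eq_mul] at hcw
      rw [hcw, inv_inv]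
    refine ⟨u, hu, w⁻¹, by simpa using hw, ?_⟩
    subst hb'
    show u * w⁻¹ = (c • u) * (c * w)⁻¹
    rw [smul_eq_mul, ← div_eq_mul_inv, ← div_eq_mul_inv, mul_div_mul_left_eq_div]
  · rintro ⟨u, hu, v, hv, rfl⟩
    refine ⟨c • u, ⟨u, hu, rfl⟩, (c • v⁻¹)⁻¹, ?_, ?_⟩
    · rw [Set.mem_inv, inv_inv]
      exact ⟨v⁻¹, by rwa [← Set.mem_inv], rfl⟩
    · show (c • u) * (c • v⁻¹)⁻¹ = u * v
      rw [smul_eq_mul, smul_eq_mul, ← div_eq_mul_inv, mul_div_mul_left_eq_div,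
        div_inv_eq_mul]

variable [t : TopologicalSpace G] [ContinuousMul G]

/-- The collection of sets `U * U⁻¹` for `U` open containing `1`. -/
def ddSets (G : Type*) [CommGroup G] [TopologicalSpace G] : Set (Set G) :=
  {s | ∃ U : Set G, IsOpen U ∧ (1 : G) ∈ U ∧ s = U * U⁻¹}

lemma ddSets_open_mem {s : Set G} (hs : s ∈ ddSets G) : IsOpen s ∧ (1 : G) ∈ s := by
  obtain ⟨U, hU, h1, rfl⟩ := hs
  refine ⟨hU.mul_right, ?_⟩
  exact ⟨1, h1, 1, by simpa using h1, by simp⟩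

/-- The group filter basis generated by the sets `U * U⁻¹`. -/
def ddBasis (G : Type*) [CommGroup G] [TopologicalSpace G] [ContinuousMul G] :
    GroupFilterBasis G :=
  groupFilterBasisOfComm (ddSets G)
    ⟨univ * univ⁻¹, univ, isOpen_univ, mem_univ _, rfl⟩
    (by
      rintro x y ⟨U, hU, hU1, rfl⟩ ⟨W, hW, hW1, rfl⟩
      refine ⟨(U ∩ W) * (U ∩ W)⁻¹, ⟨U ∩ W, hU.inter hW, ⟨hU1, hW1⟩, rfl⟩, ?_⟩
      exact subset_inter
        (mul_subset_mul inter_subset_left (Set.inv_subset_inv.2 inter_subset_left))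
        (mul_subset_mul inter_subset_right (Set.inv_subset_inv.2 inter_subset_right)))
    (fun U hU => (ddSets_open_mem hU).2)
    (by
      rintro s ⟨U, hU, hU1, rfl⟩
      obtain ⟨W, hWo, hW1, hWW⟩ := exists_open_nhds_one_mul_subset (hU.mem_nhds hU1)
      refine ⟨W * W⁻¹, ⟨W, hWo, hW1, rfl⟩, ?_⟩
      have : (W * W⁻¹) * (W * W⁻¹) = (W * W) * (W * W)⁻¹ := by
        rw [mul_inv_rev]
        rw [mul_mul_mul_comm]
      rw [this]
      exact mul_subset_mul hWW (Set.inv_subset_inv.2 hWW))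
    (by
      rintro s ⟨U, hU, hU1, rfl⟩
      refine ⟨U * U⁻¹, ⟨U, hU, hU1, rfl⟩, ?_⟩
      rintro x ⟨u, hu, v, hv, rfl⟩
      exact ⟨v⁻¹, hv, u⁻¹, by simpa using hu, by simp [mul_comm]⟩)

end Aux

/-- If `(G, τ)` is a Hausdorff Abelian paratopological group with countable π-character
at the identity (there is a countable family of nonempty open sets such that every
neighborhood of the identity contains a member of the family), then `G` is
submetrizable: there is a metrizable topology on `G` coarser than `τ`. -/
theorem hausdorff_abelian_countable_piCharacter_paratopological_group_submetrizable
    {G : Type*} [CommGroup G] [t : TopologicalSpace G] [T2Space G] [ContinuousMul G]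
    (V : ℕ → Set G)
    (hV : ∀ n, IsOpen (V n) ∧ (V n).Nonempty)
    (hpi : ∀ U ∈ 𝓝 (1 : G), ∃ n, V n ⊆ U) :
    ∃ t' : TopologicalSpace G, t ≤ t' ∧ @TopologicalSpace.MetrizableSpace G t' := by
  classical
  -- separation data, with respect to the original topology `t`
  have hsep : ∀ x : G, x ≠ 1 → ∃ U : Set G, IsOpen U ∧ (1 : G) ∈ U ∧ x ∉ U * U⁻¹ := by
    intro x hx
    obtain ⟨A, C, hA, hC, hxA, h1C, hAC⟩ := t2_separation hx
    refine ⟨C ∩ (fun y => x * y) ⁻¹' A,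
      hC.inter ((continuous_mul_left x).isOpen_preimage A hA),
      ⟨h1C, by simpa using hxA⟩, ?_⟩
    rintro ⟨u, hu, v, hv, hx'⟩
    rw [Set.mem_inv] at hv
    have h1 : x * v⁻¹ ∈ A := hv.2
    have h2 : x * v⁻¹ ∈ C := by
      have : x * v⁻¹ = u := by rw [← hx']; group
      rw [this]; exact hu.1
    exact absurd (hAC.le_bot ⟨h1, h2⟩) (by simp)
  -- each `V n * (V n)⁻¹` belongs to the family `ddSets`
  have hmemdd : ∀ n, V n * (V n)⁻¹ ∈ ddSets G := by
    intro n
    obtain ⟨xn, hxn⟩ := (hV n).2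
    exact ⟨xn⁻¹ • V n, (hV n).1.smul xn⁻¹, ⟨xn, hxn, by simp⟩, (dd_smul_eq xn⁻¹ (V n)).symm⟩
  set B := ddBasis G with hB
  refine ⟨B.topology, ?_, ?_⟩
  · -- the new topology is coarser
    rw [le_iff_nhds]
    intro x
    rw [(B.nhds_hasBasis x).ge_iff]
    intro s hs
    have hso := ddSets_open_mem (G := G) hs
    have : IsOpen ((fun y => x * y) '' s) := isOpenMap_mul_left x s hso.1
    exact this.mem_nhds ⟨1, hso.2, mul_one x⟩
  · -- the new topology is metrizable
    have hcg' : B.toFilterBasis.filter.IsCountablyGenerated := by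
      have hbasis : B.toFilterBasis.filter.HasBasis (fun _ : ℕ => True)
          (fun n => V n * (V n)⁻¹) := by
        constructor
        intro s
        rw [B.toFilterBasis.hasBasis.mem_iff]
        constructor
        · rintro ⟨w, ⟨U, hUo, hU1, rfl⟩, hsub⟩
          obtain ⟨n, hn⟩ := hpi U (hUo.mem_nhds hU1)
          exact ⟨n, trivial, (mul_subset_mul hn (Set.inv_subset_inv.2 hn)).trans hsub⟩
        · rintro ⟨n, -, hsub⟩
          exact ⟨V n * (V n)⁻¹, hmemdd n, hsub⟩
      exact Filter.HasCountableBasis.isCountablyGenerated ⟨hbasis, Set.to_countable _⟩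
    letI t' := B.topology
    haveI htg : @IsTopologicalGroup G t' _ := B.isTopologicalGroup
    haveI ht2 : @T2Space G t' := by
      refine @IsTopologicalGroup.t2Space_of_one_sep G t' _ _ ?_
      intro x hx
      obtain ⟨U, hUo, hU1, hxU⟩ := hsep x hx
      exact ⟨U * U⁻¹, B.mem_nhds_one ⟨U, hUo, hU1, rfl⟩, hxU⟩
    haveI hcg : (@nhds G t' 1).IsCountablyGenerated := by
      rw [B.nhds_one_eq]
      exact hcg'
    haveI ht0 : @T0Space G t' := inferInstance
    letI u : UniformSpace G := @IsTopologicalGroup.rightUniformSpace G _ t' htg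
    haveI hug : @IsUniformGroup G u _ := @isUniformGroup_of_commGroup G _ t' htg
    haveI : (@uniformity G u).IsCountablyGenerated :=
      @IsUniformGroup.uniformity_countably_generated G u _ hug hcg
    exact @UniformSpace.metrizableSpace G u _ _
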